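/- Let X be a quandle, G_X its enveloping group, and G an abelian group with a left G_X-action by automorphisms (x·a denotes the action of the image of x ∈ X). Consider the bead transformation with κ = 0: a braid word w on k strands (a list of letters σ_j^{±1}, 1 ≤ j ≤ k−1) transforms a bottom color vector x⃗ ∈ X^k and bead vector a⃗ ∈ G^k, letter by letter, by: σ_j replaces (x_j, x_{j+1}) by (x_{j+1}, x_j * x_{j+1}) and (a_j, a_{j+1}) by (a_{j+1}, x_{j+1}·a_j + a_{j+1} − (x_j*x_{j+1})·a_{j+1}), leaving other entries fixed, and σ_j^{−1} applies the inverse transformation. Let (y⃗, b⃗) be the resulting top vectors. Then the weighted sum is preserved: WS_{y⃗}(b⃗) = WS_{x⃗}(a⃗), where WS_{x⃗}(a⃗) = Σ_{i=1}^{k} (x_k·x_{k−1}·…·x_{i+1})·a_i (the coefficient of a_k being the identity), the products x_k…x_{i+1} being taken in G_X. -/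

import Mathlib

open Quandles

/-- The canonical map from a quandle to its enveloping group. -/
def iota (X : Type*) [Quandle X] (x : X) : Rack.EnvelGroup X := Rack.toEnvelGroup X x

/-- The bead transformation (with `κ = 0`) of the braid generator `σ_j` (strands are
indexed `0, 1, 2, …`; `σ_j` involves strands `j` and `j+1`): colors transform by
`(x_j, x_{j+1}) ↦ (x_{j+1}, x_j * x_{j+1})` (the paper's `x_j * x_{j+1}` is Mathlib's
`x_{j+1} ◃ x_j`), and beads by
`(a_j, a_{j+1}) ↦ (a_{j+1}, x_{j+1}·a_j + a_{j+1} − (x_j*x_{j+1})·a_{j+1})`. -/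
def posStep {X G : Type*} [Quandle X] [AddCommGroup G]
    [DistribMulAction (Rack.EnvelGroup X) G]
    (j : ℕ) (s : (ℕ → X) × (ℕ → G)) : (ℕ → X) × (ℕ → G) :=
  (Function.update (Function.update s.1 j (s.1 (j + 1))) (j + 1) (s.1 (j + 1) ◃ s.1 j),
   Function.update (Function.update s.2 j (s.2 (j + 1))) (j + 1)
     (iota X (s.1 (j + 1)) • s.2 j + s.2 (j + 1) -
       iota X (s.1 (j + 1) ◃ s.1 j) • s.2 (j + 1)))

/-- Transformation associated to a braid word, applied letter by letter from bottom to
top; a letter `(j, true)` is `σ_j` and `(j, false)` is `σ_j⁻¹`. -/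
def wordAction {σ : Type*} (pos neg : ℕ → σ → σ) : List (ℕ × Bool) → σ → σ
  | [], s => s
  | l :: w, s => wordAction pos neg w ((if l.2 then pos l.1 else neg l.1) s)

/-- The coefficient `x_{k-1}·x_{k-2}·…·x_{i+1}` (descending, in the enveloping group)
of the `i`-th bead in the weighted sum on `k` strands. -/
def coeff {X : Type*} [Quandle X] (k i : ℕ) (x : ℕ → X) : Rack.EnvelGroup X :=
  ((List.range (k - 1 - i)).map fun m => iota X (x (k - 1 - m))).prod

/-- The weighted sum `WS_{x⃗}(a⃗) = Σ_i (x_{k-1}·…·x_{i+1})·a_i`. -/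
def weightedSum {X G : Type*} [Quandle X] [AddCommGroup G]
    [DistribMulAction (Rack.EnvelGroup X) G]
    (k : ℕ) (s : (ℕ → X) × (ℕ → G)) : G :=
  ∑ i ∈ Finset.range k, coeff k i s.1 • s.2 i

lemma iota_act {X : Type*} [Quandle X] (a b : X) :
    iota X (a ◃ b) = iota X a * iota X b * (iota X a)⁻¹ := by
  have h := (Rack.toEnvelGroup X).map_act (x := a) (y := b)
  exact h

lemma coeff_succ {X : Type*} [Quandle X] (k i : ℕ) (h : i + 1 < k) (x : ℕ → X) :
    coeff k i x = coeff k (i + 1) x * iota X (x (i + 1)) := by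
  unfold coeff
  have h1 : k - 1 - i = (k - 1 - (i + 1)) + 1 := by omega
  have h2 : k - 1 - (k - 1 - (i + 1)) = i + 1 := by omega
  rw [h1, List.range_succ, List.map_append, List.prod_append]
  simp [h2]

lemma coeff_congr {X : Type*} [Quandle X] (k i : ℕ) (x x' : ℕ → X)
    (h : ∀ m, i < m → m < k → x m = x' m) :
    coeff k i x = coeff k i x' := by
  unfold coeff
  congr 1
  apply List.map_congr_left
  intro m hm
  rw [List.mem_range] at hm
  rw [h (k - 1 - m) (by omega) (by omega)]

lemma weightedSum_posStep {X G : Type*} [Quandle X] [AddCommGroup G]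
    [DistribMulAction (Rack.EnvelGroup X) G]
    (k j : ℕ) (hj : j + 2 ≤ k) (s : (ℕ → X) × (ℕ → G)) :
    weightedSum k (posStep j s) = weightedSum k s := by
  obtain ⟨x, a⟩ := s
  set x' : ℕ → X := (posStep (G := G) j (x, a)).1 with hx'
  set a' : ℕ → G := (posStep (G := G) j (x, a)).2 with ha'
  have hxj : x' j = x (j + 1) := by
    simp [hx', posStep, Function.update_of_ne (by omega : j ≠ j + 1)]
  have hxj1 : x' (j + 1) = x (j + 1) ◃ x j := by
    simp [hx', posStep]
  have hxo : ∀ m, m ≠ j → m ≠ j + 1 → x' m = x m := by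
    intro m h1 h2
    simp [hx', posStep, Function.update_of_ne h1, Function.update_of_ne h2]
  have haj : a' j = a (j + 1) := by
    simp [ha', posStep, Function.update_of_ne (by omega : j ≠ j + 1)]
  have haj1 : a' (j + 1) =
      iota X (x (j + 1)) • a j + a (j + 1) - iota X (x (j + 1) ◃ x j) • a (j + 1) := by
    simp [ha', posStep]
  have hao : ∀ m, m ≠ j → m ≠ j + 1 → a' m = a m := by
    intro m h1 h2
    simp [ha', posStep, Function.update_of_ne h1, Function.update_of_ne h2]
  -- coefficients for i ≥ j + 1 are unchanged
  have hA : ∀ i, j + 1 ≤ i → coeff k i x' = coeff k i x := by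
    intro i hi
    exact (coeff_congr k i x x' (fun m h1 h2 =>
      (hxo m (by omega) (by omega)).symm)).symm
  -- coefficient at j
  have hB : coeff k j x' = coeff k (j + 1) x * iota X (x (j + 1) ◃ x j) := by
    rw [coeff_succ k j (by omega), hA (j + 1) le_rfl, hxj1]
  -- coefficients below j are unchanged
  have hC : ∀ n i, i < j → j - i ≤ n → coeff k i x' = coeff k i x := by
    intro n
    induction n with
    | zero => intro i h1 h2; omega
    | succ n ih =>
      intro i h1 h2
      rcases Nat.lt_or_ge (i + 1) j with hl | hg
      · rw [coeff_succ k i (by omega) x', coeff_succ k i (by omega) x,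
          ih (i + 1) hl (by omega), hxo (i + 1) (by omega) (by omega)]
      · have hij : i + 1 = j := by omega
        rw [coeff_succ k i (by omega) x', coeff_succ k i (by omega) x, hij, hB, hxj,
          coeff_succ k j (by omega) x, iota_act]
        group
  have hCoeff : ∀ i, i ≠ j → coeff k i x' = coeff k i x := by
    intro i hi
    rcases Nat.lt_or_ge i j with h | h
    · exact hC (j - i) i h le_rfl
    · exact hA i (by omega)
  -- now the sum
  have hjmem : j ∈ Finset.range k := by simp; omega
  have hj1mem : j + 1 ∈ (Finset.range k).erase j := by
    simp [Finset.mem_erase]; omega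
  show (∑ i ∈ Finset.range k, coeff k i x' • a' i) = ∑ i ∈ Finset.range k, coeff k i x • a i
  rw [← Finset.add_sum_erase _ _ hjmem, ← Finset.add_sum_erase _ _ hjmem,
    ← Finset.add_sum_erase _ _ hj1mem, ← Finset.add_sum_erase _ _ hj1mem]
  have hrest : (∑ i ∈ ((Finset.range k).erase j).erase (j + 1), coeff k i x' • a' i) =
      ∑ i ∈ ((Finset.range k).erase j).erase (j + 1), coeff k i x • a i := by
    apply Finset.sum_congr rfl
    intro i hi
    rw [Finset.mem_erase, Finset.mem_erase] at hi
    rw [hCoeff i hi.2.1, hao i hi.2.1 hi.1]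
  rw [hrest, hB, haj, haj1, hCoeff (j + 1) (by omega),
    coeff_succ k j (by omega) x]
  set C := coeff k (j + 1) x
  set g := iota X (x (j + 1) ◃ x j)
  set h := iota X (x (j + 1))
  rw [smul_sub, smul_add, mul_smul, mul_smul]
  abel

/-- For the bead transformation with `κ = 0` (`σ_j⁻¹` acting as the inverse
transformation of `σ_j`), any braid word on `k` strands preserves the weighted sum:
`WS_{y⃗}(b⃗) = WS_{x⃗}(a⃗)`. -/
theorem weightedSum_preserved_by_braid_word
    {X G : Type*} [Quandle X] [AddCommGroup G]
    [DistribMulAction (Rack.EnvelGroup X) G]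
    (k : ℕ) (neg : ℕ → (ℕ → X) × (ℕ → G) → (ℕ → X) × (ℕ → G))
    (hneg : ∀ j : ℕ, Function.LeftInverse (neg j) (posStep (G := G) j) ∧
      Function.RightInverse (neg j) (posStep (G := G) j))
    (w : List (ℕ × Bool)) (hw : ∀ l ∈ w, l.1 + 2 ≤ k)
    (s : (ℕ → X) × (ℕ → G)) :
    weightedSum k (wordAction posStep neg w s) = weightedSum k s := by
  induction w generalizing s with
  | nil => rfl
  | cons l w ih =>
    have hl : l.1 + 2 ≤ k := hw l List.mem_cons_self
    have hw' : ∀ l' ∈ w, l'.1 + 2 ≤ k := fun l' h => hw l' (List.mem_cons_of_mem _ h)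
    show weightedSum k (wordAction posStep neg w ((if l.2 then posStep l.1 else neg l.1) s))
        = weightedSum k s
    rw [ih hw']
    by_cases hb : l.2
    · simp only [hb, if_true]
      exact weightedSum_posStep k l.1 hl s
    · simp only [hb, if_false]
      calc weightedSum k (neg l.1 s)
          = weightedSum k (posStep l.1 (neg l.1 s)) :=
            (weightedSum_posStep k l.1 hl _).symm
        _ = weightedSum k s := by rw [(hneg l.1).2 s]
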